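/- (Concavity inequality) Let A, B : [0,T) → ℝ be differentiable with A(t) > 0, B(t) ≥ 0, A'(t) ≥ 2αB(t) for some α > 2, and suppose (A'(t))² ≤ 4 A(t) B'(t) (Cauchy–Schwarz structure). Then d/dt [A^{−α/2}(t) B(t)] ≥ 0, i.e., A^{−α/2} B is nondecreasing on (0,T). -/

import Mathlib

open Real

/-- Abstract concavity lemma: if `A > 0`, `B ≥ 0`, `A' ≥ 2αB` with `α > 2`, and
`(A')² ≤ 4AB'`, then `A^{−α/2} B` has nonnegative derivative, hence is nondecreasing. -/
theorem concavity_inequality (T α : ℝ) (hT : 0 < T) (hα : 2 < α)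
    (A B A' B' : ℝ → ℝ)
    (hA : ∀ t ∈ Set.Ico (0 : ℝ) T, HasDerivAt A (A' t) t)
    (hB : ∀ t ∈ Set.Ico (0 : ℝ) T, HasDerivAt B (B' t) t)
    (hApos : ∀ t ∈ Set.Ico (0 : ℝ) T, 0 < A t)
    (hBnn : ∀ t ∈ Set.Ico (0 : ℝ) T, 0 ≤ B t)
    (hAB : ∀ t ∈ Set.Ico (0 : ℝ) T, 2 * α * B t ≤ A' t)
    (hCS : ∀ t ∈ Set.Ico (0 : ℝ) T, (A' t) ^ 2 ≤ 4 * A t * B' t) :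
    (∀ t ∈ Set.Ioo (0 : ℝ) T,
      0 ≤ -(α / 2) * A t ^ (-(α / 2) - 1) * A' t * B t + A t ^ (-(α / 2)) * B' t) ∧
    MonotoneOn (fun t => A t ^ (-(α / 2)) * B t) (Set.Ioo (0 : ℝ) T) := by
  have hsub : Set.Ioo (0 : ℝ) T ⊆ Set.Ico 0 T := Set.Ioo_subset_Ico_self
  -- key pointwise inequality on Ico
  have key : ∀ t ∈ Set.Ico (0 : ℝ) T,
      0 ≤ -(α / 2) * A t ^ (-(α / 2) - 1) * A' t * B t + A t ^ (-(α / 2)) * B' t := by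
    intro t ht
    have hApt := hApos t ht
    have hBt := hBnn t ht
    have hABt := hAB t ht
    have hCSt := hCS t ht
    have hA'nn : 0 ≤ A' t := le_trans (by positivity) hABt
    -- (α/2) * A' t * B t ≤ A t * B' t
    have h1 : (α / 2) * A' t * B t ≤ (A' t) ^ 2 / 4 := by
      nlinarith [mul_le_mul_of_nonneg_left hABt hA'nn]
    have h2 : (α / 2) * A' t * B t ≤ A t * B' t := by nlinarith
    have hpow : A t ^ (-(α / 2) - 1) = A t ^ (-(α / 2)) / A t := by
      rw [Real.rpow_sub hApt, Real.rpow_one]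
    rw [hpow]
    have hpownn : 0 < A t ^ (-(α / 2)) := Real.rpow_pos_of_pos hApt _
    have heq : -(α / 2) * (A t ^ (-(α / 2)) / A t) * A' t * B t + A t ^ (-(α / 2)) * B' t
        = (A t ^ (-(α / 2)) * (A t * B' t - (α / 2) * A' t * B t)) / A t := by
      field_simp
      ring
    rw [heq]
    apply div_nonneg _ hApt.le
    exact mul_nonneg hpownn.le (sub_nonneg.mpr h2)
  refine ⟨fun t ht => key t (hsub ht), ?_⟩
  -- the function has the given derivative on Ico
  have hderiv : ∀ t ∈ Set.Ico (0 : ℝ) T,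
      HasDerivAt (fun t => A t ^ (-(α / 2)) * B t)
        (-(α / 2) * A t ^ (-(α / 2) - 1) * A' t * B t + A t ^ (-(α / 2)) * B' t) t := by
    intro t ht
    have h1 : HasDerivAt (fun t => A t ^ (-(α / 2)))
        (A' t * (-(α / 2)) * A t ^ (-(α / 2) - 1)) t :=
      (hA t ht).rpow_const (Or.inl (hApos t ht).ne')
    have : HasDerivAt (fun t => A t ^ (-(α / 2)) * B t)
        (A' t * (-(α / 2)) * A t ^ (-(α / 2) - 1) * B t + A t ^ (-(α / 2)) * B' t) t :=
      h1.mul (hB t ht)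
    convert this using 1
    ring
  apply monotoneOn_of_deriv_nonneg (convex_Ioo 0 T)
  · exact fun t ht => ((hderiv t (hsub ht)).continuousAt).continuousWithinAt
  · rw [interior_Ioo]
    exact fun t ht => ((hderiv t (hsub ht)).differentiableAt).differentiableWithinAt
  · rw [interior_Ioo]
    intro t ht
    rw [(hderiv t (hsub ht)).deriv]
    exact key t (hsub ht)
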